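/- arXiv:2310.05045 — 2 statements merged into one kernel-verified Lean document; each statement's English description precedes it below -/
import Mathlib

section
/- (ODE blow-up, n = 3 case) Let C > 0 and suppose X ∈ C²([0,T);ℝ) satisfies X''(t) ≥ C X(t)² / (e^t (t+1)) + X(t) for all t ∈ [0,T), with X(0) + X'(0) = ε x₀ where x₀ > 0, X(0) ≥ 0, X'(0) ≥ 0, and ε > 0 sufficiently small. Then T is finite, and moreover T ≤ exp(C' ε^{-1}) for some constant C' > 0 independent of ε. -/
open Real Set Filter Topology

set_option maxHeartbeats 1600000 in
/-- ODE blow-up lemma (n = 3 case, Lemma 2.1 of Jin–Zhou): a `C²` function on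
`[0,T)` satisfying `X'' ≥ C X² / (eᵗ(t+1)) + X` with small positive "initial energy"
`X(0) + X'(0) = ε x₀` forces `T ≤ exp (C' / ε)`. -/
theorem stmt_13 (C x₀ : ℝ) (hC : 0 < C) (hx₀ : 0 < x₀) :
    ∃ ε₀ C' : ℝ, 0 < ε₀ ∧ 0 < C' ∧
      ∀ ε : ℝ, 0 < ε → ε ≤ ε₀ →
        ∀ (T : ℝ) (X : ℝ → ℝ),
          ContDiffOn ℝ 2 X (Ico 0 T) →
          (∀ t ∈ Ico (0 : ℝ) T,
              C * X t ^ 2 / (exp t * (t + 1)) + X t ≤ deriv (deriv X) t) →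
          X 0 + deriv X 0 = ε * x₀ →
          0 ≤ X 0 → 0 ≤ deriv X 0 →
          (0 : ℝ) < T →
          T ≤ exp (C' / ε) := by
  refine ⟨1, 4 + 81 / (C * x₀), one_pos, by positivity, ?_⟩
  intro ε hε hε1 T X hX hODE hinit hX0 hd0 hT
  by_contra hcon
  push_neg at hcon
  -- setup
  have hU : UniqueDiffOn ℝ (Ico (0:ℝ) T) := uniqueDiffOn_Ico 0 T
  set X₁ := derivWithin X (Ico (0:ℝ) T) with hX₁def
  set X₂ := derivWithin X₁ (Ico (0:ℝ) T) with hX₂def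
  have hX1cd : ContDiffOn ℝ 1 X₁ (Ico 0 T) := hX.derivWithin hU (by norm_num)
  have hXc : ContinuousOn X (Ico 0 T) := hX.continuousOn
  have hX1c : ContinuousOn X₁ (Ico 0 T) := hX1cd.continuousOn
  have hder1 : ∀ t ∈ Ico (0:ℝ) T, HasDerivWithinAt X (X₁ t) (Ico 0 T) t := fun t ht =>
    ((hX.differentiableOn (by norm_num)) t ht).hasDerivWithinAt
  have hder2 : ∀ t ∈ Ico (0:ℝ) T, HasDerivWithinAt X₁ (X₂ t) (Ico 0 T) t := fun t ht =>
    ((hX1cd.differentiableOn (by norm_num)) t ht).hasDerivWithinAt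
  have hmemnhds : ∀ t ∈ Ioo (0:ℝ) T, Ico (0:ℝ) T ∈ 𝓝 t := fun t ht =>
    mem_of_superset (isOpen_Ioo.mem_nhds ht) Ioo_subset_Ico_self
  have hD1 : ∀ t ∈ Ioo (0:ℝ) T, HasDerivAt X (X₁ t) t := fun t ht =>
    (hder1 t (Ioo_subset_Ico_self ht)).hasDerivAt (hmemnhds t ht)
  have hD2 : ∀ t ∈ Ioo (0:ℝ) T, HasDerivAt X₁ (X₂ t) t := fun t ht =>
    (hder2 t (Ioo_subset_Ico_self ht)).hasDerivAt (hmemnhds t ht)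
  -- interior differential inequality
  have hODE' : ∀ t ∈ Ioo (0:ℝ) T, C * X t ^ 2 / (exp t * (t+1)) + X t ≤ X₂ t := by
    intro t ht
    have h1 : deriv (deriv X) t = X₂ t := by
      have heq : deriv X =ᶠ[𝓝 t] X₁ :=
        eventuallyEq_of_mem (isOpen_Ioo.mem_nhds ht) (fun s hs => (hD1 s hs).deriv)
      rw [heq.deriv_eq]
      exact (hD2 t ht).deriv
    rw [← h1]
    exact hODE t (Ioo_subset_Ico_self ht)
  have h0mem : (0:ℝ) ∈ Ico (0:ℝ) T := ⟨le_rfl, hT⟩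
  -- the within-derivative at 0 agrees with deriv X 0
  have hX10 : X₁ 0 = deriv X 0 := by
    by_cases h : DifferentiableAt ℝ X 0
    · exact h.derivWithin (hU 0 h0mem)
    · have hdX0 : deriv X 0 = 0 := deriv_zero_of_not_differentiableAt h
      have hX00 : X 0 = ε * x₀ := by rw [hdX0] at hinit; linarith
      by_cases h2 : DifferentiableAt ℝ (deriv X) 0
      · have hne : (𝓝[Ioo (0:ℝ) T] (0:ℝ)).NeBot := by
          apply mem_closure_iff_nhdsWithin_neBot.mp
          rw [closure_Ioo hT.ne]
          exact ⟨le_rfl, hT.le⟩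
        have t1 : Tendsto X₁ (𝓝[Ioo (0:ℝ) T] 0) (𝓝 (X₁ 0)) :=
          (hX1c 0 h0mem).mono_left (nhdsWithin_mono _ Ioo_subset_Ico_self)
        have t2 : Tendsto (deriv X) (𝓝[Ioo (0:ℝ) T] 0) (𝓝 (deriv X 0)) :=
          h2.continuousAt.continuousWithinAt
        have heq : deriv X =ᶠ[𝓝[Ioo (0:ℝ) T] 0] X₁ :=
          eventuallyEq_of_mem self_mem_nhdsWithin (fun s hs => (hD1 s hs).deriv)
        have t2' : Tendsto X₁ (𝓝[Ioo (0:ℝ) T] 0) (𝓝 (deriv X 0)) := t2.congr' heq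
        exact tendsto_nhds_unique t1 t2'
      · exfalso
        have hdd : deriv (deriv X) 0 = 0 := deriv_zero_of_not_differentiableAt h2
        have h0 := hODE 0 h0mem
        rw [hdd, hX00] at h0
        simp only [Real.exp_zero, zero_add, one_mul, div_one] at h0
        nlinarith [mul_pos hε hx₀, sq_nonneg (ε * x₀)]
  -- notations
  set a := ε * x₀ with ha
  have ha0 : 0 < a := mul_pos hε hx₀
  set Z : ℝ → ℝ := fun u => exp (-u) * (X u + X₁ u) with hZdef
  have hZ0 : Z 0 = a := by
    simp only [hZdef, neg_zero, Real.exp_zero, one_mul, hX10]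
    exact hinit
  have hZd : ∀ u ∈ Ioo (0:ℝ) T, HasDerivAt Z (exp (-u) * (X₂ u - X u)) u := by
    intro u hu
    have h1 : HasDerivAt (fun v => X v + X₁ v) (X₁ u + X₂ u) u := (hD1 u hu).add (hD2 u hu)
    have h2 : HasDerivAt (fun v : ℝ => exp (-v)) (-exp (-u)) u := by
      simpa [Function.comp_def] using (Real.hasDerivAt_exp (-u)).comp u ((hasDerivAt_id u).neg)
    have h3 := h2.mul h1
    exact h3.congr_deriv (by ring)
  have hZc : ContinuousOn Z (Ico 0 T) :=
    ((Real.continuous_exp.comp continuous_neg).continuousOn).mul (hXc.add hX1c)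
  -- generic monotonicity engine
  have engine : ∀ (f f' : ℝ → ℝ) (p t : ℝ), p ≤ t →
      ContinuousOn f (Icc p t) →
      (∀ u ∈ Ioo p t, HasDerivAt f (f' u) u) →
      (∀ u ∈ Ioo p t, 0 ≤ f' u) → f p ≤ f t := by
    intro f f' p t hpt hc hd hpos
    have hmono := monotoneOn_of_deriv_nonneg (convex_Icc p t) hc
      (fun u hu => by
        rw [interior_Icc] at hu
        exact (hd u hu).differentiableAt.differentiableWithinAt)
      (fun u hu => by
        rw [interior_Icc] at hu
        rw [(hd u hu).deriv]
        exact hpos u hu)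
    exact hmono ⟨le_rfl, hpt⟩ ⟨hpt, le_rfl⟩ hpt
  have hsub : ∀ p t : ℝ, 0 ≤ p → t < T → Icc p t ⊆ Ico 0 T := fun p t hp htT u hu =>
    ⟨hp.trans hu.1, lt_of_le_of_lt hu.2 htT⟩
  have hIoo : ∀ p t : ℝ, 0 ≤ p → t < T → Ioo p t ⊆ Ioo 0 T := fun p t hp htT u hu =>
    ⟨lt_of_le_of_lt hp hu.1, hu.2.trans htT⟩
  -- Z is nondecreasing
  have hZmono : ∀ s t : ℝ, 0 ≤ s → s ≤ t → t < T → Z s ≤ Z t := by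
    intro s t hs hst htT
    refine engine Z (fun u => exp (-u) * (X₂ u - X u)) s t hst (hZc.mono (hsub s t hs htT))
      (fun u hu => hZd u (hIoo s t hs htT hu)) ?_
    intro u hu
    have h1 := hODE' u (hIoo s t hs htT hu)
    have h2 : 0 ≤ C * X u ^ 2 / (exp u * (u + 1)) := by
      have : (0:ℝ) < u + 1 := by
        have := (hIoo s t hs htT hu).1; linarith
      positivity
    have h3 : 0 ≤ X₂ u - X u := by linarith
    positivity
  have hZpos : ∀ t : ℝ, 0 ≤ t → t < T → a ≤ Z t := fun t h1 h2 => by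
    rw [← hZ0]; exact hZmono 0 t le_rfl h1 h2
  -- G(t) = exp t * X t
  set G : ℝ → ℝ := fun u => exp u * X u with hGdef
  have hGd : ∀ u ∈ Ioo (0:ℝ) T, HasDerivAt G (exp (2*u) * Z u) u := by
    intro u hu
    have h1 := (Real.hasDerivAt_exp u).mul (hD1 u hu)
    refine h1.congr_deriv ?_
    symm
    simp only [hZdef]
    rw [show exp (2*u) * (exp (-u) * (X u + X₁ u)) = exp (2*u) * exp (-u) * (X u + X₁ u) by ring,
      ← Real.exp_add]
    ring_nf
  have hGc : ContinuousOn G (Ico 0 T) := Real.continuous_exp.continuousOn.mul hXc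
  have hGmono : ∀ s t : ℝ, 0 ≤ s → s ≤ t → t < T → G s ≤ G t := by
    intro s t hs hst htT
    refine engine G (fun u => exp (2*u) * Z u) s t hst (hGc.mono (hsub s t hs htT))
      (fun u hu => hGd u (hIoo s t hs htT hu)) ?_
    intro u hu
    have hu' := hIoo s t hs htT hu
    have h1 : a ≤ Z u := hZpos u hu'.1.le hu'.2
    have h2 : 0 < exp (2*u) := exp_pos _
    show (0:ℝ) ≤ exp (2*u) * Z u
    nlinarith
  have hGpos : ∀ t : ℝ, 0 ≤ t → t < T → 0 ≤ G t := by
    intro t h1 h2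
    have : G 0 ≤ G t := hGmono 0 t le_rfl h1 h2
    have hG0 : G 0 = X 0 := by simp [hGdef]
    linarith
  -- delay estimate : X(t) ≥ Z(p) (e^{2t}-e^{2p})/(2 e^t)
  have hdelay : ∀ p t : ℝ, 0 ≤ p → p ≤ t → t < T →
      Z p * ((exp (2*t) - exp (2*p))/2) ≤ exp t * X t := by
    intro p t hp hpt htT
    have key := engine (fun u => G u - Z p * exp (2*u) / 2)
      (fun u => exp (2*u) * Z u - Z p * (2 * exp (2*u)) / 2) p t hpt
      ?_ ?_ ?_
    · have hGp : 0 ≤ G p := hGpos p hp (lt_of_le_of_lt hpt htT)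
      have key' : G p - Z p * exp (2*p) / 2 ≤ G t - Z p * exp (2*t) / 2 := key
      show Z p * ((exp (2*t) - exp (2*p))/2) ≤ G t
      linarith
    · apply ContinuousOn.sub (hGc.mono (hsub p t hp htT))
      fun_prop
    · intro u hu
      have hu' := hIoo p t hp htT hu
      have h1 : HasDerivAt (fun v : ℝ => exp (2*v)) (2 * exp (2*u)) u := by
        have h0 : HasDerivAt (fun v : ℝ => 2*v) 2 u := by
          simpa using (hasDerivAt_id u).const_mul 2
        simpa [mul_comm] using h0.exp
      exact (hGd u hu').sub ((h1.const_mul (Z p)).div_const 2)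
    · intro u hu
      have hu' := hIoo p t hp htT hu
      have h1 : Z p ≤ Z u := hZmono p u hp hu.1.le hu'.2
      have h2 : 0 < exp (2*u) := exp_pos _
      show (0:ℝ) ≤ exp (2*u) * Z u - Z p * (2 * exp (2*u)) / 2
      nlinarith
  -- growth estimate
  have hgrow : ∀ m p t : ℝ, 0 ≤ m → 0 ≤ p → p ≤ t → t < T →
      (∀ u, u ∈ Ioo p t → m * exp u ≤ X u) →
      Z p + (C * m^2) * (Real.log (t+1) - Real.log (p+1)) ≤ Z t := by
    intro m p t hm hp hpt htT hXlow
    have key := engine (fun u => Z u - C * m^2 * Real.log (u+1))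
      (fun u => exp (-u) * (X₂ u - X u) - C * m^2 * (1/(u+1))) p t hpt ?_ ?_ ?_
    · have key' : Z p - C * m^2 * Real.log (p+1) ≤ Z t - C * m^2 * Real.log (t+1) := key
      linarith
    · apply ContinuousOn.sub (hZc.mono (hsub p t hp htT))
      apply ContinuousOn.mul continuousOn_const
      apply ContinuousOn.log (by fun_prop)
      intro u hu
      have : 0 ≤ u := hp.trans hu.1
      intro h; linarith [this]
    · intro u hu
      have hu' := hIoo p t hp htT hu
      have hu1 : (0:ℝ) < u + 1 := by linarith [hu'.1]
      have h1 : HasDerivAt (fun v : ℝ => Real.log (v+1)) (1/(u+1)) u := by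
        have := (Real.hasDerivAt_log hu1.ne').comp u ((hasDerivAt_id u).add_const 1)
        simpa [one_div, Function.comp_def] using this
      exact (hZd u hu').sub (h1.const_mul (C * m^2))
    · intro u hu
      have hu' := hIoo p t hp htT hu
      have hu1 : (0:ℝ) < u + 1 := by linarith [hu'.1]
      have hx := hXlow u hu
      have hOD := hODE' u hu'
      have hXu : 0 ≤ X u := le_trans (by positivity) hx
      have hsq : m^2 * exp u ^ 2 ≤ X u ^ 2 := by
        have h5 : (m * exp u)^2 ≤ X u ^ 2 := by
          apply pow_le_pow_left₀ (by positivity) hx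
        rwa [mul_pow] at h5
      have step1 : C * m^2 * (1/(u+1)) ≤ exp (-u) * (C * X u ^ 2 / (exp u * (u+1))) := by
        rw [← sub_nonneg]
        have expand : exp (-u) * (C * X u ^ 2 / (exp u * (u + 1))) - C * m ^ 2 * (1 / (u + 1))
            = (C * (X u ^ 2 - m^2 * exp u ^ 2)) * (exp (-u) / (exp u * (u+1))) := by
          rw [Real.exp_neg]
          field_simp
        rw [expand]
        have h5 : 0 ≤ X u ^ 2 - m^2 * exp u ^ 2 := by linarith
        have h6 : 0 ≤ exp (-u) / (exp u * (u+1)) := by positivity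
        exact mul_nonneg (mul_nonneg hC.le h5) h6
      have step2 : exp (-u) * (C * X u ^ 2 / (exp u * (u+1))) ≤ exp (-u) * (X₂ u - X u) := by
        apply mul_le_mul_of_nonneg_left _ (exp_pos _).le
        linarith
      linarith
  -- iteration times
  set L : ℕ → ℝ := fun n => ∑ k ∈ Finset.range n, ((3/4:ℝ)^k + (9/(C*a)) * (8/9:ℝ)^k) with hLdef
  have hL0 : L 0 = 0 := by simp [hLdef]
  have hLrec : ∀ n, L (n+1) = L n + ((3/4:ℝ)^n + (9/(C*a)) * (8/9:ℝ)^n) := by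
    intro n; simp [hLdef, Finset.sum_range_succ]
  have hLnonneg : ∀ n, 0 ≤ L n := by
    intro n
    apply Finset.sum_nonneg
    intro k _
    positivity
  have hLbound : ∀ n, L n ≤ 4 + 81/(C*a) := by
    intro n
    have h34 : ∑ k ∈ Finset.range n, ((3:ℝ)/4)^k ≤ 4 := by
      rw [geom_sum_eq (by norm_num : ((3:ℝ)/4) ≠ 1)]
      have h := pow_nonneg (by norm_num : (0:ℝ) ≤ 3/4) n
      have he : (((3:ℝ)/4)^n - 1)/((3:ℝ)/4 - 1) = 4 - 4*((3:ℝ)/4)^n := by ring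
      rw [he]; linarith
    have h89 : ∑ k ∈ Finset.range n, ((8:ℝ)/9)^k ≤ 9 := by
      rw [geom_sum_eq (by norm_num : ((8:ℝ)/9) ≠ 1)]
      have h := pow_nonneg (by norm_num : (0:ℝ) ≤ 8/9) n
      have he : (((8:ℝ)/9)^n - 1)/((8:ℝ)/9 - 1) = 9 - 9*((8:ℝ)/9)^n := by ring
      rw [he]; linarith
    have hsplit : L n = (∑ k ∈ Finset.range n, ((3:ℝ)/4)^k)
        + (9/(C*a)) * ∑ k ∈ Finset.range n, ((8:ℝ)/9)^k := by
      simp [hLdef, Finset.sum_add_distrib, Finset.mul_sum]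
    rw [hsplit]
    have hca : (0:ℝ) ≤ 9/(C*a) := by positivity
    have h2 := mul_le_mul_of_nonneg_left h89 hca
    have h5 : (9:ℝ)/(C*a)*9 = 81/(C*a) := by ring
    linarith
  -- main induction : Z(t) ≥ a 2^n for t ≥ exp (L n) - 1
  have main : ∀ n : ℕ, ∀ t : ℝ, exp (L n) - 1 ≤ t → t < T → a * 2^n ≤ Z t := by
    intro n
    induction n with
    | zero =>
      intro t h1 h2
      have h0 : (0:ℝ) ≤ t := by rw [hL0] at h1; simpa using h1
      simpa using hZpos t h0 h2
    | succ n ih =>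
      intro t ht1 ht2
      have hδ0 : (0:ℝ) < (3/4:ℝ)^n := by positivity
      have hδ1 : ((3:ℝ)/4)^n ≤ 1 := pow_le_one₀ (by norm_num) (by norm_num)
      have hb0 : (0:ℝ) < a * 2^n := by positivity
      have hexpL : (1:ℝ) ≤ exp (L n) := by
        rw [← Real.exp_zero]; exact exp_le_exp.mpr (hLnonneg n)
      set p : ℝ := (exp (L n) - 1) + (3/4:ℝ)^n with hpdef
      have hp0 : 0 ≤ p := by rw [hpdef]; linarith
      have hpe : p + 1 ≤ exp (L n + (3/4:ℝ)^n) := by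
        rw [hpdef, Real.exp_add]
        have h2' : 1 + (3/4:ℝ)^n ≤ exp ((3/4:ℝ)^n) := by
          have := Real.add_one_le_exp ((3/4:ℝ)^n); linarith
        nlinarith
      have hLs : L n + (3/4:ℝ)^n ≤ L (n+1) := by
        rw [hLrec n]
        have h4 : (0:ℝ) ≤ (9/(C*a)) * ((8:ℝ)/9)^n := by positivity
        linarith
      have hpt : p ≤ t := by
        have h3 : exp (L n + (3/4:ℝ)^n) ≤ exp (L (n+1)) := exp_le_exp.mpr hLs
        have h6 : p + 1 ≤ exp (L (n+1)) := le_trans hpe h3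
        linarith [h6, ht1]
      -- window lower bound for X
      have hwin : ∀ u, u ∈ Ioo p t → ((3/4:ℝ)^n * (a * 2^n) / 3) * exp u ≤ X u := by
        intro u hu
        have hu1' := hu.1
        rw [hpdef] at hu1'
        have hu0 : exp (L n) - 1 ≤ u - (3/4:ℝ)^n := by linarith
        have hu0' : 0 ≤ u - (3/4:ℝ)^n := by linarith
        have huT : u < T := lt_trans hu.2 ht2
        have hZb : a * 2^n ≤ Z (u - (3/4:ℝ)^n) := ih _ hu0 (by linarith)
        have hd := hdelay (u - (3/4:ℝ)^n) u hu0' (by linarith) huT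
        have hEE : exp u * exp u = exp (2*u) := by rw [← Real.exp_add]; ring_nf
        have hexpfac : exp (2*u) * (2 * (3/4:ℝ)^n/3) ≤ exp (2*u) - exp (2*(u - (3/4:ℝ)^n)) := by
          have h1 : exp (2*(u - (3/4:ℝ)^n)) = exp (2*u) * exp (-(2*(3/4:ℝ)^n)) := by
            rw [← Real.exp_add]; ring_nf
          rw [h1]
          have h3 : exp (-(2*(3/4:ℝ)^n)) ≤ 1/(1 + 2*(3/4:ℝ)^n) := by
            rw [Real.exp_neg, ← one_div]
            apply one_div_le_one_div_of_le (by positivity)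
            have := Real.add_one_le_exp (2*(3/4:ℝ)^n); linarith
          have h4 : 1/(1 + 2*(3/4:ℝ)^n) ≤ 1 - 2*(3/4:ℝ)^n/3 := by
            rw [div_le_iff₀ (by positivity)]
            nlinarith [mul_nonneg hδ0.le (sub_nonneg.mpr hδ1)]
          nlinarith [exp_pos (2*u)]
        have hE0 : (0:ℝ) ≤ exp (2*u) - exp (2*(u - (3/4:ℝ)^n)) := le_trans (by positivity) hexpfac
        have c1 : a * 2^n * ((exp (2*u) - exp (2*(u - (3/4:ℝ)^n)))/2)
            ≤ Z (u - (3/4:ℝ)^n) * ((exp (2*u) - exp (2*(u - (3/4:ℝ)^n)))/2) :=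
          mul_le_mul_of_nonneg_right hZb (by linarith)
        have c2 : a * 2^n * (exp (2*u) * (2 * (3/4:ℝ)^n/3) / 2)
            ≤ a * 2^n * ((exp (2*u) - exp (2*(u - (3/4:ℝ)^n)))/2) :=
          mul_le_mul_of_nonneg_left (by linarith) hb0.le
        have hfin : ((3/4:ℝ)^n * (a * 2^n) / 3) * exp u * exp u ≤ X u * exp u := by
          have e1 : ((3/4:ℝ)^n * (a * 2^n) / 3) * exp u * exp u
              = a * 2^n * (exp (2*u) * (2 * (3/4:ℝ)^n/3) / 2) := by
            rw [← hEE]; ring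
          rw [e1]
          calc a * 2^n * (exp (2*u) * (2 * (3/4:ℝ)^n/3) / 2)
              ≤ a * 2^n * ((exp (2*u) - exp (2*(u - (3/4:ℝ)^n)))/2) := c2
            _ ≤ Z (u - (3/4:ℝ)^n) * ((exp (2*u) - exp (2*(u - (3/4:ℝ)^n)))/2) := c1
            _ ≤ exp u * X u := hd
            _ = X u * exp u := mul_comm _ _
        exact le_of_mul_le_mul_right hfin (exp_pos u)
      have hgap := hgrow ((3/4:ℝ)^n * (a * 2^n) / 3) p t (by positivity) hp0 hpt ht2 hwin
      have hZp : a * 2^n ≤ Z p := by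
        refine ih p ?_ (lt_of_le_of_lt hpt ht2)
        rw [hpdef]; linarith
      have htp1 : (0:ℝ) < t + 1 := by linarith
      have hlog1 : L (n+1) ≤ Real.log (t+1) :=
        (Real.le_log_iff_exp_le htp1).mpr (by linarith [ht1])
      have hlog2 : Real.log (p+1) ≤ L n + (3/4:ℝ)^n :=
        (Real.log_le_iff_le_exp (by linarith)).mpr hpe
      have hgapval : (9/(C*a)) * ((8:ℝ)/9)^n ≤ Real.log (t+1) - Real.log (p+1) := by
        rw [hLrec n] at hlog1; linarith
      have hCm : (0:ℝ) ≤ C * ((3/4:ℝ)^n * (a * 2^n) / 3)^2 := by positivity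
      have hexact : C * (((3:ℝ)/4)^n * (a * 2^n) / 3)^2 * ((9/(C*a)) * ((8:ℝ)/9)^n)
          = a * 2^n := by
        have hpows : ((3:ℝ)/4)^n * ((3:ℝ)/4)^n * ((2:ℝ)^n * (2:ℝ)^n) * ((8:ℝ)/9)^n = (2:ℝ)^n := by
          rw [← mul_pow, ← mul_pow, ← mul_pow, ← mul_pow]
          norm_num
        calc C * (((3:ℝ)/4)^n * (a * 2^n) / 3)^2 * ((9/(C*a)) * ((8:ℝ)/9)^n)
            = (((3:ℝ)/4)^n * ((3:ℝ)/4)^n * ((2:ℝ)^n * (2:ℝ)^n) * ((8:ℝ)/9)^n)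
              * (C * a^2 * 9 / (9 * (C*a))) := by ring
          _ = (2:ℝ)^n * (C * a^2 * 9 / (9 * (C*a))) := by rw [hpows]
          _ = a * 2^n := by
              field_simp
      have hfinal : a * 2^n ≤ C * ((3/4:ℝ)^n * (a * 2^n) / 3)^2
          * (Real.log (t+1) - Real.log (p+1)) := by
        calc a * 2^n = C * (((3:ℝ)/4)^n * (a * 2^n) / 3)^2 * ((9/(C*a)) * ((8:ℝ)/9)^n) :=
              hexact.symm
          _ ≤ C * ((3/4:ℝ)^n * (a * 2^n) / 3)^2 * (Real.log (t+1) - Real.log (p+1)) :=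
              mul_le_mul_of_nonneg_left hgapval hCm
      have hsucc : a * 2^(n+1) = a*2^n + a*2^n := by ring
      rw [hsucc]
      linarith [hgap, hZp, hfinal]
  -- conclusion
  set t' : ℝ := exp ((4 + 81/(C*x₀))/ε) - 1 with ht'def
  have hCx : 81/(C*a) = (81/(C*x₀))/ε := by
    rw [ha]; field_simp
  have hLle : ∀ n, L n ≤ (4 + 81/(C*x₀))/ε := by
    intro n
    have h1 := hLbound n
    have h2 : (4:ℝ) ≤ 4/ε := by
      rw [le_div_iff₀ hε]; nlinarith
    have h3 : (4 + 81/(C*x₀))/ε = 4/ε + (81/(C*x₀))/ε := by ring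
    rw [h3, ← hCx]
    linarith
  have ht'T : t' < T := by
    rw [ht'def]
    linarith [hcon]
  have hall : ∀ n : ℕ, a * 2^n ≤ Z t' := by
    intro n
    apply main n t' _ ht'T
    rw [ht'def]
    have h5 := exp_le_exp.mpr (hLle n)
    linarith
  obtain ⟨n, hn⟩ := pow_unbounded_of_one_lt (Z t' / a) (one_lt_two (α := ℝ))
  have h2 := hall n
  rw [div_lt_iff₀ ha0] at hn
  linarith [h2, hn, mul_comm a ((2:ℝ)^n), (mul_comm ((2:ℝ)^n) a ▸ rfl : a * 2^n = a * 2^n)]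
end

section
/- (Reduction step X' = Y) Suppose ρ, u are C¹ on [0,T) × ℝ³, ρ - 1 and u are supported in {|x| ≤ t+1} for each t, and the continuity equation ∂_t ρ + ∇·(ρu) = 0 holds. Define X(t) = ∫_{ℝ³}∫_{S²} e^{ω·x}(ρ(t,x)-1) dω dx and Y(t) = ∫_{ℝ³}∫_{S²} e^{ω·x} ρ(t,x)(u(t,x)·ω) dω dx. Then X is differentiable and X'(t) = Y(t) for all t ∈ [0,T). -/
open Real Set MeasureTheory
open Filter Topology

set_option synthInstance.maxHeartbeats 1000000
set_option maxHeartbeats 1000000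

local notation "E3" => EuclideanSpace ℝ (Fin 3)
local notation "Ω3" => Metric.sphere (0 : EuclideanSpace ℝ (Fin 3)) 1
local notation "μS" => Measure.toSphere (volume : Measure (EuclideanSpace ℝ (Fin 3)))

namespace Stmt15Aux


lemma sph_integrable {F : Type*} [NormedAddCommGroup F] {f : Ω3 → F} (hf : Continuous f) :
    Integrable f μS :=
  hf.integrable_of_hasCompactSupport (IsClosed.isCompact (isClosed_tsupport f))

lemma cont_inner_sph (x : E3) : Continuous fun ω : Ω3 => (inner ℝ (ω : E3) x : ℝ) :=
  Continuous.inner continuous_subtype_val continuous_const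

lemma norm_sph (ω : Ω3) : ‖(ω : E3)‖ = 1 := mem_sphere_zero_iff_norm.mp ω.2

lemma abs_coord_le (x : E3) (i : Fin 3) : |x i| ≤ ‖x‖ := by
  have h := abs_real_inner_le_norm (EuclideanSpace.single i (1:ℝ)) x
  simpa [EuclideanSpace.inner_single_left] using h

lemma sph_cont_integrand {c : Ω3 → ℝ} (hc : Continuous c) (y : E3) :
    Continuous fun ω : Ω3 => Real.exp (inner ℝ (ω : E3) y) * c ω :=
  (Real.continuous_exp.comp (cont_inner_sph y)).mul hc

lemma sph_cont_integrand' {c : Ω3 → ℝ} (hc : Continuous c) (y : E3) :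
    Continuous fun ω : Ω3 =>
      (Real.exp (inner ℝ (ω : E3) y) * c ω) • (innerSL ℝ (ω : E3)) :=
  (sph_cont_integrand hc y).smul ((innerSL ℝ).continuous.comp continuous_subtype_val)

lemma exp_deriv_pt {ω : Ω3} {c : Ω3 → ℝ} (y : E3) :
    HasFDerivAt (fun z : E3 => Real.exp (inner ℝ (ω : E3) z) * c ω)
      ((Real.exp (inner ℝ (ω : E3) y) * c ω) • (innerSL ℝ (ω : E3))) y := by
  have h1 : HasFDerivAt (fun z : E3 => (inner ℝ (ω : E3) z : ℝ)) (innerSL ℝ (ω : E3)) y :=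
    (innerSL ℝ (ω : E3)).hasFDerivAt
  have h2 := (Real.hasDerivAt_exp (inner ℝ (ω : E3) y)).comp_hasFDerivAt y h1
  have h3 := h2.mul_const (c ω)
  refine HasFDerivAt.congr_fderiv h3 ?_
  rw [smul_smul, mul_comm]

lemma sph_hasFDerivAt {c : Ω3 → ℝ} (hc : Continuous c) (hb : ∀ ω, |c ω| ≤ 1) (x : E3) :
    HasFDerivAt (fun y : E3 => ∫ ω : Ω3, Real.exp (inner ℝ (ω : E3) y) * c ω ∂μS)
      (∫ ω : Ω3, (Real.exp (inner ℝ (ω : E3) x) * c ω) • (innerSL ℝ (ω : E3)) ∂μS) x := by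
  refine hasFDerivAt_integral_of_dominated_of_fderiv_le (s := Metric.ball x 1)
    (F' := fun y (ω : Ω3) => (Real.exp (inner ℝ (ω : E3) y) * c ω) • (innerSL ℝ (ω : E3)))
    (bound := fun _ => Real.exp (‖x‖ + 1)) (Metric.ball_mem_nhds x one_pos) ?_ ?_ ?_ ?_ ?_ ?_
  · exact Filter.Eventually.of_forall fun y => (sph_cont_integrand hc y).aestronglyMeasurable
  · exact sph_integrable (sph_cont_integrand hc x)
  · exact (sph_cont_integrand' hc x).aestronglyMeasurable
  · refine Filter.Eventually.of_forall fun ω => fun y hy => ?_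
    have hn : ‖(Real.exp (inner ℝ (ω : E3) y) * c ω) • (innerSL ℝ (ω : E3))‖
        = ‖Real.exp (inner ℝ (ω : E3) y) * c ω‖ * ‖innerSL ℝ (ω : E3)‖ :=
      norm_smul (β := EuclideanSpace ℝ (Fin 3) →L[ℝ] ℝ) _ _
    rw [hn, innerSL_apply_norm, norm_sph, mul_one, Real.norm_eq_abs, abs_mul,
      abs_of_pos (Real.exp_pos _)]
    have h1 : (inner ℝ (ω : E3) y : ℝ) ≤ ‖x‖ + 1 := by
      have := real_inner_le_norm (ω : E3) y
      have hny : ‖y‖ ≤ ‖x‖ + 1 := by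
        have hd : dist y x < 1 := Metric.mem_ball.mp hy
        have h2 : ‖y‖ - ‖x‖ ≤ ‖y - x‖ := norm_sub_norm_le _ _
        rw [dist_eq_norm] at hd
        linarith
      calc (inner ℝ (ω : E3) y : ℝ) ≤ ‖(ω : E3)‖ * ‖y‖ := real_inner_le_norm _ _
        _ = ‖y‖ := by rw [norm_sph, one_mul]
        _ ≤ ‖x‖ + 1 := hny
    calc Real.exp (inner ℝ (ω : E3) y) * |c ω| ≤ Real.exp (inner ℝ (ω : E3) y) * 1 := by
          have := hb ω; nlinarith [Real.exp_pos (inner ℝ (ω : E3) y : ℝ), abs_nonneg (c ω)]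
      _ ≤ Real.exp (‖x‖ + 1) := by rw [mul_one]; exact Real.exp_le_exp.mpr h1
  · exact integrable_const _
  · exact Filter.Eventually.of_forall fun ω y _ => exp_deriv_pt y

lemma sph_fderiv_apply {c : Ω3 → ℝ} (hc : Continuous c) (x v : E3) :
    (∫ ω : Ω3, (Real.exp (inner ℝ (ω : E3) x) * c ω) • (innerSL ℝ (ω : E3)) ∂μS) v
      = ∫ ω : Ω3, (Real.exp (inner ℝ (ω : E3) x) * c ω) * (inner ℝ (ω : E3) v : ℝ) ∂μS := by
  rw [ContinuousLinearMap.integral_apply (sph_integrable (sph_cont_integrand' hc x))]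
  simp only [ContinuousLinearMap.coe_smul', Pi.smul_apply, innerSL_apply_apply, smul_eq_mul]




lemma pi_div (g : (Fin 3 → ℝ) → ℝ) (g' : (Fin 3 → ℝ) → (Fin 3 → ℝ) →L[ℝ] ℝ)
    (hd : ∀ y, HasFDerivAt g (g' y) y) (hs : HasCompactSupport g) (i : Fin 3)
    (hc : Continuous fun y => g' y (Pi.single i 1)) :
    ∫ y : Fin 3 → ℝ, g' y (Pi.single i 1) = 0 := by
  classical
  obtain ⟨R, hR0, hRs⟩ := hs.isBounded.subset_ball_lt 0 (0 : Fin 3 → ℝ)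
  have hgz : ∀ y : Fin 3 → ℝ, R ≤ ‖y‖ → g y = 0 := by
    intro y hy
    apply image_eq_zero_of_notMem_tsupport
    intro hmem
    exact absurd (mem_ball_zero_iff.mp (hRs hmem)) (not_lt.mpr hy)
  have hg'z : ∀ y : Fin 3 → ℝ, R ≤ ‖y‖ → g' y (Pi.single i 1) = 0 := by
    intro y hy
    have h1 : g' y = fderiv ℝ g y := ((hd y).fderiv).symm
    have h2 : y ∉ tsupport g := fun hmem =>
      absurd (mem_ball_zero_iff.mp (hRs hmem)) (not_lt.mpr hy)
    have h3 : fderiv ℝ g y = 0 := by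
      by_contra h
      exact h2 (support_fderiv_subset ℝ (Function.mem_support.mpr h))
    rw [h1, h3]; rfl
  set a : Fin 3 → ℝ := fun _ => -R with ha
  set b : Fin 3 → ℝ := fun _ => R with hb
  have hab : a ≤ b := fun j => by simp only [ha, hb]; linarith
  have hgd : Differentiable ℝ g := fun y => (hd y).differentiableAt
  have hgc : Continuous g := hgd.continuous
  set f : Fin 3 → (Fin 3 → ℝ) → ℝ := fun j => if j = i then g else fun _ => 0 with hf
  set f' : Fin 3 → (Fin 3 → ℝ) → (Fin 3 → ℝ) →L[ℝ] ℝ :=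
    fun j => if j = i then g' else fun _ => 0 with hf'
  have hsum : ∀ y : Fin 3 → ℝ, (∑ j : Fin 3, f' j y (Pi.single j 1)) = g' y (Pi.single i 1) := by
    intro y
    rw [Finset.sum_eq_single i]
    · simp [hf']
    · intro j _ hj; simp [hf', hj]
    · intro h; exact absurd (Finset.mem_univ i) h
  have hbox := MeasureTheory.integral_divergence_of_hasFDerivAt_off_countable'
    a b hab f f' ∅ countable_empty
    (fun j => by
      by_cases h : j = i
      · simpa [hf, h] using hgc.continuousOn
      · simp only [hf, if_neg h]; exact continuousOn_const)
    (fun y _ j => by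
      by_cases h : j = i
      · simpa [hf, hf', h] using hd y
      · simp only [hf, hf', if_neg h]; exact hasFDerivAt_const 0 y)
    (by
      refine ContinuousOn.integrableOn_compact isCompact_Icc ?_
      have : (fun y => ∑ j : Fin 3, f' j y (Pi.single j 1))
          = fun y => g' y (Pi.single i 1) := funext hsum
      rw [this]; exact hc.continuousOn)
  have hins : ∀ (j : Fin 3) (c : ℝ), |c| = R → ∀ x : Fin 2 → ℝ,
      f j (j.insertNth c x) = 0 := by
    intro j c hcR x
    by_cases h : j = i
    · rw [hf]; simp only [if_pos h]
      apply hgz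
      have h1 : ‖(j.insertNth c x : Fin 3 → ℝ) j‖ ≤ ‖(j.insertNth c x : Fin 3 → ℝ)‖ :=
        norm_le_pi_norm _ j
      rw [Fin.insertNth_apply_same, Real.norm_eq_abs, hcR] at h1
      exact h1
    · rw [hf]; simp only [if_neg h]
  have hfaces : ∀ j : Fin 3,
      ((∫ x in Icc (a ∘ j.succAbove) (b ∘ j.succAbove), f j (j.insertNth (b j) x)) -
        ∫ x in Icc (a ∘ j.succAbove) (b ∘ j.succAbove), f j (j.insertNth (a j) x)) = 0 := by
    intro j
    have e1 : (fun x : Fin 2 → ℝ => f j (j.insertNth (b j) x)) = fun _ => (0:ℝ) :=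
      funext (hins j (b j) (by rw [hb]; exact abs_of_pos hR0))
    have e2 : (fun x : Fin 2 → ℝ => f j (j.insertNth (a j) x)) = fun _ => (0:ℝ) :=
      funext (hins j (a j) (by rw [ha]; simp only []; rw [abs_neg]; exact abs_of_pos hR0))
    rw [e1, e2]
    simp
  rw [Finset.sum_congr rfl (fun j _ => hfaces j), Finset.sum_const_zero] at hbox
  have hIcc : ∫ y in Icc a b, g' y (Pi.single i 1) = 0 := by
    have : (fun y => ∑ j : Fin 3, f' j y (Pi.single j 1))
        = fun y => g' y (Pi.single i 1) := funext hsum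
    rw [← this]
    exact hbox
  rw [← hIcc]
  symm
  apply MeasureTheory.setIntegral_eq_integral_of_forall_compl_eq_zero
  intro y hy
  apply hg'z
  by_contra hR
  push_neg at hR
  apply hy
  rw [Set.mem_Icc]
  have hyb : ∀ j, -R ≤ y j ∧ y j ≤ R := by
    intro j
    have h1 : |y j| ≤ ‖y‖ := by simpa using norm_le_pi_norm y j
    exact abs_le.mp (le_of_lt (lt_of_le_of_lt h1 hR))
  constructor
  · intro j; simp only [ha]; linarith [(hyb j).1]
  · intro j; simp only [hb]; linarith [(hyb j).2]




lemma e3_div (h : E3 → ℝ) (h' : E3 → E3 →L[ℝ] ℝ)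
    (hd : ∀ x, HasFDerivAt h (h' x) x) (hs : HasCompactSupport h) (i : Fin 3)
    (hc : Continuous fun x => h' x (EuclideanSpace.single i 1)) :
    ∫ x : E3, h' x (EuclideanSpace.single i 1) = 0 := by
  set L : (Fin 3 → ℝ) ≃L[ℝ] E3 := (EuclideanSpace.equiv (Fin 3) ℝ).symm with hL
  have hLs : L (Pi.single i 1) = EuclideanSpace.single i (1:ℝ) := rfl
  have key : ∫ y : Fin 3 → ℝ, h' (L y) (EuclideanSpace.single i 1) = 0 := by
    have := pi_div (fun y => h (L y))
      (fun y => (h' (L y)).comp (L : (Fin 3 → ℝ) →L[ℝ] E3))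
      (fun y => ((hd (L y)).comp y L.hasFDerivAt))
      (hs.comp_homeomorph L.toHomeomorph) i
      (by simpa [ContinuousLinearMap.comp_apply, hLs, Function.comp_def] using
        hc.comp L.continuous)
    simpa [ContinuousLinearMap.comp_apply, hLs] using this
  have hmp : MeasurePreserving (MeasurableEquiv.toLp 2 (Fin 3 → ℝ)).symm.symm
      (volume : Measure (Fin 3 → ℝ)) (volume : Measure E3) :=
    (EuclideanSpace.volume_preserving_symm_measurableEquiv_toLp (Fin 3)).symm
  have heq : ∀ y : Fin 3 → ℝ, (MeasurableEquiv.toLp 2 (Fin 3 → ℝ)).symm.symm y = L y :=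
    fun _ => rfl
  rw [← hmp.integral_comp' (fun x => h' x (EuclideanSpace.single i 1))]
  exact key


lemma cpt_integrable {f : E3 → ℝ} (hf : Continuous f) {R : ℝ}
    (h0 : ∀ x : E3, R < ‖x‖ → f x = 0) : Integrable f (volume : Measure E3) :=
  hf.integrable_of_hasCompactSupport
    (HasCompactSupport.intro (isCompact_closedBall (0:E3) R) fun x hx =>
      h0 x (by simpa [Metric.mem_closedBall, dist_zero_right, not_le] using hx))

lemma parts {K L : E3 → ℝ} {DK : E3 → E3 →L[ℝ] ℝ} (hKd : ∀ x, HasFDerivAt K (DK x) x)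
    {i : Fin 3} (hDK : ∀ x, DK x (EuclideanSpace.single i 1) = L x) (hL : Continuous L)
    {f : E3 → ℝ} (hf : ContDiff ℝ 1 f) {R : ℝ} (hfs : ∀ x : E3, R < ‖x‖ → f x = 0) :
    ∫ x : E3, K x * (fderiv ℝ f x (EuclideanSpace.single i 1))
      = - ∫ x : E3, f x * L x := by
  have hKc : Continuous K := continuous_iff_continuousAt.mpr fun x => (hKd x).continuousAt
  have hfd : Differentiable ℝ f := hf.differentiable one_ne_zero
  have hfc : Continuous f := hfd.continuous
  have hdf_cont : Continuous fun x => fderiv ℝ f x (EuclideanSpace.single i 1) :=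
    ((ContinuousLinearMap.apply ℝ ℝ (EuclideanSpace.single i (1:ℝ))).continuous).comp
      (hf.continuous_fderiv one_ne_zero)
  have htsupp : tsupport f ⊆ Metric.closedBall (0:E3) R := by
    apply closure_minimal _ Metric.isClosed_closedBall
    intro x hx
    by_contra hxc
    rw [Metric.mem_closedBall, dist_zero_right, not_le] at hxc
    exact hx (hfs x hxc)
  have hdf0 : ∀ x : E3, R < ‖x‖ → fderiv ℝ f x (EuclideanSpace.single i 1) = 0 := by
    intro x hx
    have h2 : x ∉ tsupport f := fun hmem => by
      have := htsupp hmem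
      rw [Metric.mem_closedBall, dist_zero_right] at this
      linarith
    have h3 : fderiv ℝ f x = 0 := by
      by_contra hne
      exact h2 (support_fderiv_subset ℝ (Function.mem_support.mpr hne))
    rw [h3]; rfl
  set h' : E3 → E3 →L[ℝ] ℝ := fun x => K x • fderiv ℝ f x + f x • DK x with hh'
  have hd : ∀ x, HasFDerivAt (fun y => K y * f y) (h' x) x := fun x =>
    (hKd x).mul (hfd x).hasFDerivAt
  have hcs : HasCompactSupport (fun y => K y * f y) :=
    HasCompactSupport.intro (isCompact_closedBall (0:E3) R) fun x hx => by
      rw [hfs x (by simpa [Metric.mem_closedBall, dist_zero_right, not_le] using hx), mul_zero]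
  have happ : ∀ x, h' x (EuclideanSpace.single i 1)
      = K x * (fderiv ℝ f x (EuclideanSpace.single i 1)) + f x * L x := by
    intro x
    simp only [hh', ContinuousLinearMap.add_apply, ContinuousLinearMap.coe_smul',
      Pi.smul_apply, smul_eq_mul, hDK]
  have hcont' : Continuous fun x => h' x (EuclideanSpace.single i 1) := by
    have : (fun x => h' x (EuclideanSpace.single i 1))
        = fun x => K x * (fderiv ℝ f x (EuclideanSpace.single i 1)) + f x * L x :=
      funext happ
    rw [this]
    exact (hKc.mul hdf_cont).add (hfc.mul hL)
  have hzero := e3_div _ h' hd hcs i hcont'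
  have hre : (fun x : E3 => h' x (EuclideanSpace.single i 1))
      = fun x => K x * (fderiv ℝ f x (EuclideanSpace.single i 1)) + f x * L x := funext happ
  rw [hre] at hzero
  have int1 : Integrable (fun x : E3 => K x * (fderiv ℝ f x (EuclideanSpace.single i 1)))
      (volume : Measure E3) :=
    cpt_integrable (hKc.mul hdf_cont) fun x hx => by rw [hdf0 x hx, mul_zero]
  have int2 : Integrable (fun x : E3 => f x * L x) (volume : Measure E3) :=
    cpt_integrable (hfc.mul hL) fun x hx => by rw [hfs x hx, zero_mul]
  rw [integral_add int1 int2] at hzero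
  linarith





lemma cont_int {T : ℝ} {v : ℝ → E3 → ℝ}
    (hv : ContinuousOn (fun p : ℝ × E3 => v p.1 p.2) (Ico 0 T ×ˢ univ))
    (h0 : ∀ t ∈ Ico (0:ℝ) T, ∀ x : E3, t + 1 < ‖x‖ → v t x = 0)
    {t₀ : ℝ} (ht₀ : t₀ ∈ Ico (0:ℝ) T) :
    ContinuousWithinAt (fun t => ∫ x : E3, v t x) (Ico 0 T) t₀ := by
  obtain ⟨ht₀0, ht₀T⟩ := ht₀
  set T' := min T (t₀ + 1) with hT'
  have hT₀' : t₀ < T' := lt_min ht₀T (lt_add_one t₀)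
  set τ := (t₀ + T') / 2 with hτdef
  have h1 : t₀ < τ := by rw [hτdef]; linarith
  have h2 : τ < T' := by rw [hτdef]; linarith
  have hτT : τ < T := lt_of_lt_of_le h2 (min_le_left _ _)
  have hτ1 : τ ≤ t₀ + 1 := le_trans (le_of_lt h2) (min_le_right _ _)
  have hCsub : (Icc (0:ℝ) τ ×ˢ Metric.closedBall (0:E3) (τ+1)) ⊆ Ico 0 T ×ˢ univ := by
    rintro ⟨s, x⟩ ⟨hs, -⟩
    exact ⟨⟨hs.1, lt_of_le_of_lt hs.2 hτT⟩, mem_univ _⟩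
  obtain ⟨M, hM⟩ := (isCompact_Icc.prod
    (isCompact_closedBall (0:E3) (τ+1))).exists_bound_of_continuousOn (hv.mono hCsub)
  have hwin : ∀ᶠ s in nhdsWithin t₀ (Ico 0 T), s ∈ Icc 0 τ ∧ s ∈ Ico 0 T := by
    have hnb : Iio τ ∈ nhds t₀ := Iio_mem_nhds h1
    filter_upwards [mem_nhdsWithin_of_mem_nhds hnb, self_mem_nhdsWithin] with s hs1 hs2
    exact ⟨⟨hs2.1, le_of_lt hs1⟩, hs2⟩
  refine continuousWithinAt_of_dominated
    (bound := (Metric.closedBall (0:E3) (τ+1)).indicator fun _ => M) ?_ ?_ ?_ ?_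
  · filter_upwards [self_mem_nhdsWithin] with s hs
    have hc : Continuous fun x => v s x := by
      rw [← continuousOn_univ]
      exact hv.comp (continuous_const.prodMk continuous_id).continuousOn
        fun x _ => ⟨hs, mem_univ x⟩
    exact hc.aestronglyMeasurable
  · filter_upwards [hwin] with s hs
    refine Eventually.of_forall fun x => ?_
    by_cases hx : ‖x‖ ≤ τ + 1
    · have hxm : x ∈ Metric.closedBall (0:E3) (τ+1) := by
        rwa [Metric.mem_closedBall, dist_zero_right]
      rw [indicator_of_mem hxm]
      exact hM (s, x) ⟨hs.1, hxm⟩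
    · push_neg at hx
      have hvz : v s x = 0 := h0 s hs.2 x (by linarith [hs.1.2])
      rw [hvz, indicator_of_notMem
        (by rw [Metric.mem_closedBall, dist_zero_right]; exact not_le.mpr hx)]
      simp
  · rw [integrable_indicator_iff measurableSet_closedBall]
    exact integrableOn_const measure_closedBall_lt_top.ne
  · refine Eventually.of_forall fun x => ?_
    exact ContinuousWithinAt.comp (f := fun s : ℝ => ((s : ℝ), x))
      (g := fun p : ℝ × E3 => v p.1 p.2)
      (hv (t₀, x) ⟨⟨ht₀0, ht₀T⟩, mem_univ x⟩)
      ((continuous_id.prodMk continuous_const).continuousWithinAt)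
      (fun s hs => ⟨hs, mem_univ x⟩)

lemma deriv_under_integral {T : ℝ} {ρ : ℝ → E3 → ℝ}
    (hρ : ContDiffOn ℝ 1 (fun p : ℝ × E3 => ρ p.1 p.2) (Ico 0 T ×ˢ univ))
    (hsupp : ∀ t ∈ Ico (0 : ℝ) T, ∀ x : E3, t + 1 < ‖x‖ → ρ t x = 1)
    {K : E3 → ℝ} (hK : Continuous K) {t₀ : ℝ} (ht₀ : t₀ ∈ Ico (0:ℝ) T) :
    HasDerivWithinAt (fun t => ∫ x : E3, K x * (ρ t x - 1))
      (∫ x : E3, K x *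
        (fderivWithin ℝ (fun p : ℝ × E3 => ρ p.1 p.2) (Ico 0 T ×ˢ univ) (t₀, x)) (1, 0))
      (Ico 0 T) t₀ := by
  obtain ⟨ht₀0, ht₀T⟩ := ht₀
  set P : Set (ℝ × E3) := Ico 0 T ×ˢ univ with hP
  set ρp : ℝ × E3 → ℝ := fun p => ρ p.1 p.2 with hρp
  set g : ℝ → E3 → ℝ := fun t x => fderivWithin ℝ ρp P (t, x) (1, 0) with hgdef
  have hUD : UniqueDiffOn ℝ P := (uniqueDiffOn_Ico 0 T).prod uniqueDiffOn_univ
  have hdiff : DifferentiableOn ℝ ρp P := hρ.differentiableOn one_ne_zero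
  have hgd : ∀ t ∈ Ico (0:ℝ) T, ∀ x : E3,
      HasDerivWithinAt (fun s => ρ s x) (g t x) (Ico 0 T) t := by
    intro t ht x
    have h1 : HasFDerivWithinAt ρp (fderivWithin ℝ ρp P (t, x)) P (t, x) :=
      (hdiff (t, x) ⟨ht, mem_univ x⟩).hasFDerivWithinAt
    have h2 : HasDerivWithinAt (fun s : ℝ => ((s : ℝ), x)) ((1:ℝ), (0:E3)) (Ico 0 T) t :=
      ((hasDerivAt_id t).prodMk (hasDerivAt_const t x)).hasDerivWithinAt
    exact h1.comp_hasDerivWithinAt t h2 fun s hs => show ((s : ℝ), x) ∈ P from ⟨hs, mem_univ x⟩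
  have hslice : ∀ s ∈ Ico (0:ℝ) T, Continuous fun x => ρ s x := by
    intro s hs
    rw [← continuousOn_univ]
    exact hρ.continuousOn.comp (continuous_const.prodMk continuous_id).continuousOn
      fun x _ => ⟨hs, mem_univ x⟩
  set T' := min T (t₀ + 1) with hT'
  have hT₀' : t₀ < T' := lt_min ht₀T (lt_add_one t₀)
  set τ := (t₀ + T') / 2 with hτdef
  have h1 : t₀ < τ := by rw [hτdef]; linarith
  have h2 : τ < T' := by rw [hτdef]; linarith
  have hτT : τ < T := lt_of_lt_of_le h2 (min_le_left _ _)
  have hτ1 : τ ≤ t₀ + 1 := le_trans (le_of_lt h2) (min_le_right _ _)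
  have hCsub : (Icc (0:ℝ) τ ×ˢ Metric.closedBall (0:E3) (τ+1)) ⊆ P := by
    rintro ⟨s, x⟩ ⟨hs, -⟩
    exact ⟨⟨hs.1, lt_of_le_of_lt hs.2 hτT⟩, mem_univ _⟩
  have hfc : ContinuousOn (fderivWithin ℝ ρp P) P := hρ.continuousOn_fderivWithin hUD le_rfl
  obtain ⟨M, hM⟩ := (isCompact_Icc.prod
    (isCompact_closedBall (0:E3) (τ+1))).exists_bound_of_continuousOn (hfc.mono hCsub)
  have hgM : ∀ s ∈ Icc (0:ℝ) τ, ∀ x ∈ Metric.closedBall (0:E3) (τ+1), |g s x| ≤ M := by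
    intro s hs x hx
    have hle := (fderivWithin ℝ ρp P (s, x)).le_opNorm ((1:ℝ), (0:E3))
    have hn1 : ‖((1:ℝ), (0:E3))‖ = 1 := by
      rw [Prod.norm_def]
      simp
    rw [hn1, mul_one] at hle
    calc |g s x| = ‖(fderivWithin ℝ ρp P (s, x)) ((1:ℝ), (0:E3))‖ := (Real.norm_eq_abs _).symm
      _ ≤ ‖fderivWithin ℝ ρp P (s, x)‖ := hle
      _ ≤ M := hM (s, x) ⟨hs, hx⟩
  have ht₀Icc : t₀ ∈ Icc (0:ℝ) τ := ⟨ht₀0, le_of_lt h1⟩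
  have hMVT : ∀ x ∈ Metric.closedBall (0:E3) (τ+1), ∀ s ∈ Icc (0:ℝ) τ,
      |ρ s x - ρ t₀ x| ≤ M * |s - t₀| := by
    intro x hx s hs
    have hmv := Convex.norm_image_sub_le_of_norm_hasDerivWithin_le
      (f := fun r => ρ r x) (f' := fun r => g r x) (s := Icc (0:ℝ) τ)
      (fun r hr => (hgd r ⟨hr.1, lt_of_le_of_lt hr.2 hτT⟩ x).mono
        (fun z hz => ⟨hz.1, lt_of_le_of_lt hz.2 hτT⟩))
      (fun r hr => by rw [Real.norm_eq_abs]; exact hgM r hr x hx)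
      (convex_Icc (0:ℝ) τ) ht₀Icc hs
    calc |ρ s x - ρ t₀ x| = ‖ρ s x - ρ t₀ x‖ := (Real.norm_eq_abs _).symm
      _ ≤ M * ‖s - t₀‖ := hmv
      _ = M * |s - t₀| := by rw [Real.norm_eq_abs]
  have hK1 : ∀ s ∈ Ico (0:ℝ) T, Integrable (fun x : E3 => K x * (ρ s x - 1))
      (volume : Measure E3) := by
    intro s hs
    refine cpt_integrable (hK.mul ((hslice s hs).sub continuous_const)) (R := s + 1) ?_
    intro x hx
    rw [hsupp s hs x hx]; ring
  set l := nhdsWithin t₀ (Ico 0 T \ {t₀}) with hldef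
  have hwin : ∀ᶠ s in l, s ∈ Icc (0:ℝ) τ ∧ s ∈ Ico 0 T ∧ s ≠ t₀ := by
    have hnb : Iio τ ∈ nhds t₀ := Iio_mem_nhds h1
    filter_upwards [mem_nhdsWithin_of_mem_nhds hnb, self_mem_nhdsWithin] with s hs1 hs2
    exact ⟨⟨hs2.1.1, le_of_lt hs1⟩, hs2.1, hs2.2⟩
  have hDCT : Tendsto (fun s => ∫ x : E3, K x * ((ρ s x - ρ t₀ x) / (s - t₀))) l
      (𝓝 (∫ x : E3, K x * g t₀ x)) := by
    refine tendsto_integral_filter_of_dominated_convergence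
      ((Metric.closedBall (0:E3) (τ+1)).indicator fun x => ‖K x‖ * M) ?_ ?_ ?_ ?_
    · filter_upwards [self_mem_nhdsWithin] with s hs
      exact (hK.mul (((hslice s hs.1).sub
        (hslice t₀ ⟨ht₀0, ht₀T⟩)).div_const _)).aestronglyMeasurable
    · filter_upwards [hwin] with s hs
      refine Eventually.of_forall fun x => ?_
      obtain ⟨hsIcc, hsS, hsne⟩ := hs
      by_cases hx : ‖x‖ ≤ τ + 1
      · have hxm : x ∈ Metric.closedBall (0:E3) (τ+1) := by
          rwa [Metric.mem_closedBall, dist_zero_right]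
        rw [indicator_of_mem hxm]
        have h3 : |ρ s x - ρ t₀ x| ≤ M * |s - t₀| := hMVT x hxm s hsIcc
        have h4 : (0:ℝ) < |s - t₀| := by
          rw [abs_pos, sub_ne_zero]; exact hsne
        rw [Real.norm_eq_abs, abs_mul, abs_div]
        have h5 : |ρ s x - ρ t₀ x| / |s - t₀| ≤ M := (div_le_iff₀ h4).mpr h3
        calc |K x| * (|ρ s x - ρ t₀ x| / |s - t₀|) ≤ |K x| * M :=
              mul_le_mul_of_nonneg_left h5 (abs_nonneg _)
          _ = ‖K x‖ * M := by rw [Real.norm_eq_abs]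
      · push_neg at hx
        have hz1 : ρ s x = 1 := hsupp s hsS x (by linarith [hsIcc.2])
        have hz2 : ρ t₀ x = 1 := hsupp t₀ ⟨ht₀0, ht₀T⟩ x (by linarith)
        rw [hz1, hz2, indicator_of_notMem
          (by rw [Metric.mem_closedBall, dist_zero_right]; exact not_le.mpr hx)]
        simp
    · rw [integrable_indicator_iff measurableSet_closedBall]
      exact ((hK.norm.mul continuous_const).continuousOn).integrableOn_compact
        (isCompact_closedBall _ _)
    · refine Eventually.of_forall fun x => ?_
      have hslope := hasDerivWithinAt_iff_tendsto_slope.mp (hgd t₀ ⟨ht₀0, ht₀T⟩ x)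
      have h6 := hslope.const_mul (K x)
      refine h6.congr fun s => ?_
      rw [slope_def_field]
  rw [hasDerivWithinAt_iff_tendsto_slope]
  refine hDCT.congr' ?_
  filter_upwards [self_mem_nhdsWithin] with s hs
  obtain ⟨hsS, hsne⟩ := hs
  rw [slope_def_field]
  rw [← integral_sub (hK1 s hsS) (hK1 t₀ ⟨ht₀0, ht₀T⟩), ← integral_div]
  congr 1
  funext x
  ring


noncomputable def Kf : E3 → ℝ := fun x => ∫ ω : Ω3, Real.exp (inner ℝ (ω : E3) x) ∂μS

noncomputable def Lf (i : Fin 3) : E3 → ℝ :=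
  fun x => ∫ ω : Ω3, Real.exp (inner ℝ (ω : E3) x) * (ω : E3) i ∂μS

noncomputable def DKf : E3 → E3 →L[ℝ] ℝ :=
  fun x => ∫ ω : Ω3, (Real.exp (inner ℝ (ω : E3) x) * 1) • innerSL ℝ (ω : E3) ∂μS

lemma cont_coordE (i : Fin 3) : Continuous fun v : E3 => v i := (EuclideanSpace.proj (𝕜 := ℝ) i).continuous

lemma cont_coord (i : Fin 3) : Continuous fun ω : Ω3 => (ω : E3) i :=
  (cont_coordE i).comp continuous_subtype_val

lemma Kf_hasFDeriv (x : E3) : HasFDerivAt Kf (DKf x) x := by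
  have h := sph_hasFDerivAt (c := fun _ : Ω3 => (1:ℝ)) continuous_const
    (fun ω => by norm_num) x
  have hfun : (fun y : E3 => ∫ ω : Ω3, Real.exp (inner ℝ (ω : E3) y) * (1:ℝ) ∂μS) = Kf := by
    funext y; simp only [mul_one]; rfl
  rwa [hfun] at h

lemma Kf_cont : Continuous Kf :=
  continuous_iff_continuousAt.mpr fun x => (Kf_hasFDeriv x).continuousAt

lemma DKf_single (x : E3) (i : Fin 3) : DKf x (EuclideanSpace.single i 1) = Lf i x := by
  have h := sph_fderiv_apply (c := fun _ : Ω3 => (1:ℝ)) continuous_const x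
    (EuclideanSpace.single i 1)
  calc DKf x (EuclideanSpace.single i 1)
      = ∫ ω : Ω3, (Real.exp (inner ℝ (ω : E3) x) * 1)
          * (inner ℝ (ω : E3) (EuclideanSpace.single i (1:ℝ)) : ℝ) ∂μS := h
    _ = Lf i x := by
        unfold Lf
        congr 1
        funext ω
        rw [mul_one, EuclideanSpace.inner_single_right]
        simp

lemma Lf_cont (i : Fin 3) : Continuous (Lf i) := by
  refine continuous_iff_continuousAt.mpr fun x => ?_
  have h := sph_hasFDerivAt (c := fun ω : Ω3 => (ω : E3) i) (cont_coord i)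
    (fun ω => by
      have h1 := abs_coord_le (ω : E3) i
      rwa [norm_sph] at h1) x
  exact h.continuousAt

lemma X_eq (r : E3 → ℝ) :
    (∫ x : E3, ∫ ω : Ω3, Real.exp (inner ℝ (ω : E3) x) * r x ∂μS) = ∫ x : E3, Kf x * r x := by
  simp only [integral_mul_const]; rfl

lemma Y_inner (x : E3) (a : ℝ) (w : E3) :
    (∫ ω : Ω3, Real.exp (inner ℝ (ω : E3) x) * (a * (inner ℝ w (ω : E3) : ℝ)) ∂μS)
      = ∑ i : Fin 3, (a * w i) * Lf i x := by
  have h1 : (fun ω : Ω3 => Real.exp (inner ℝ (ω : E3) x) * (a * (inner ℝ w (ω : E3) : ℝ)))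
      = fun ω : Ω3 => ∑ i : Fin 3,
          (a * w i) * (Real.exp (inner ℝ (ω : E3) x) * (ω : E3) i) := by
    funext ω
    have h2 : (inner ℝ w (ω : E3) : ℝ) = ∑ i : Fin 3, w i * (ω : E3) i := by
      rw [PiLp.inner_apply]
      simp [RCLike.inner_apply, conj_trivial]
      exact Finset.sum_congr rfl fun _ _ => mul_comm _ _
    rw [h2, Finset.mul_sum, Finset.mul_sum]
    exact Finset.sum_congr rfl fun i _ => by ring
  rw [h1, integral_finset_sum]
  · exact Finset.sum_congr rfl fun i _ => integral_const_mul _ _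
  · intro i _
    exact (sph_integrable (sph_cont_integrand (cont_coord i) x)).const_mul _


lemma interior_eq {T : ℝ} {ρ : ℝ → E3 → ℝ} {u : ℝ → E3 → E3}
    (hρ : ContDiffOn ℝ 1 (fun p : ℝ × E3 => ρ p.1 p.2) (Ico 0 T ×ˢ univ))
    (hu : ContDiffOn ℝ 1 (fun p : ℝ × E3 => u p.1 p.2) (Ico 0 T ×ˢ univ))
    (hsupp : ∀ t ∈ Ico (0 : ℝ) T, ∀ x : E3, t + 1 < ‖x‖ → ρ t x = 1 ∧ u t x = 0)
    (hcont : ∀ t ∈ Ico (0 : ℝ) T, ∀ x : E3,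
      deriv (fun s => ρ s x) t
        + ∑ i : Fin 3,
            fderiv ℝ (fun y => ρ t y * u t y i) x (EuclideanSpace.single i 1) = 0)
    {t : ℝ} (ht : t ∈ Ioo (0:ℝ) T) :
    (∫ x : E3, Kf x *
        (fderivWithin ℝ (fun p : ℝ × E3 => ρ p.1 p.2) (Ico 0 T ×ˢ univ) (t, x)) (1, 0))
      = ∫ x : E3, ∑ i : Fin 3, (ρ t x * u t x i) * Lf i x := by
  have htS : t ∈ Ico (0:ℝ) T := ⟨le_of_lt ht.1, ht.2⟩
  have hPn : ∀ x : E3, (Ico (0:ℝ) T ×ˢ (univ : Set E3)) ∈ 𝓝 (t, x) := by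
    intro x
    have hop : IsOpen ((Ioo (0:ℝ) T) ×ˢ (univ : Set E3)) := isOpen_Ioo.prod isOpen_univ
    refine Filter.mem_of_superset (hop.mem_nhds ⟨ht, mem_univ x⟩) ?_
    exact prod_mono Ioo_subset_Ico_self (subset_refl _)
  have hgd : ∀ x : E3,
      (fderivWithin ℝ (fun p : ℝ × E3 => ρ p.1 p.2) (Ico 0 T ×ˢ univ) (t, x)) (1, 0)
        = deriv (fun s => ρ s x) t := by
    intro x
    rw [fderivWithin_of_mem_nhds (hPn x)]
    have h2 : HasDerivAt (fun s : ℝ => ((s:ℝ), x)) ((1:ℝ), (0:E3)) t :=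
      (hasDerivAt_id t).prodMk (hasDerivAt_const t x)
    have h3 := (((hρ.contDiffAt (hPn x)).differentiableAt one_ne_zero).hasFDerivAt).comp_hasDerivAt t h2
    exact h3.deriv.symm
  have hρt : ContDiff ℝ 1 fun y : E3 => ρ t y := by
    rw [contDiff_iff_contDiffAt]
    intro x
    exact (hρ.contDiffAt (hPn x)).comp x (contDiff_prodMk_right t).contDiffAt
  have hut : ∀ i : Fin 3, ContDiff ℝ 1 fun y : E3 => u t y i := by
    intro i
    have h1 : ContDiff ℝ 1 fun y : E3 => u t y := by
      rw [contDiff_iff_contDiffAt]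
      intro x
      exact (hu.contDiffAt (hPn x)).comp x (contDiff_prodMk_right t).contDiffAt
    have h2 : ContDiff ℝ 1 fun v : E3 => v i :=
      (EuclideanSpace.proj (𝕜 := ℝ) i).contDiff
    exact h2.comp h1
  have hfi : ∀ i : Fin 3, ContDiff ℝ 1 fun y : E3 => ρ t y * u t y i :=
    fun i => hρt.mul (hut i)
  have hfis : ∀ i : Fin 3, ∀ x : E3, t + 1 < ‖x‖ → ρ t x * u t x i = 0 := by
    intro i x hx
    rw [(hsupp t htS x hx).2]
    simp
  have hparts : ∀ i : Fin 3,
      ∫ x : E3, Kf x * (fderiv ℝ (fun y => ρ t y * u t y i) x (EuclideanSpace.single i 1))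
        = - ∫ x : E3, (ρ t x * u t x i) * Lf i x := fun i =>
    parts Kf_hasFDeriv (fun x => DKf_single x i) (Lf_cont i) (hfi i) (hfis i)
  have hdfc : ∀ i : Fin 3, Continuous fun x : E3 =>
      fderiv ℝ (fun y => ρ t y * u t y i) x (EuclideanSpace.single i 1) := fun i =>
    ((ContinuousLinearMap.apply ℝ ℝ (EuclideanSpace.single i (1:ℝ))).continuous).comp
      ((hfi i).continuous_fderiv one_ne_zero)
  have hdf0 : ∀ i : Fin 3, ∀ x : E3, t + 1 < ‖x‖ →
      fderiv ℝ (fun y => ρ t y * u t y i) x (EuclideanSpace.single i 1) = 0 := by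
    intro i x hx
    have htsupp : tsupport (fun y : E3 => ρ t y * u t y i)
        ⊆ Metric.closedBall (0:E3) (t+1) := by
      apply closure_minimal _ Metric.isClosed_closedBall
      intro y hy
      by_contra hyc
      rw [Metric.mem_closedBall, dist_zero_right, not_le] at hyc
      exact hy (hfis i y hyc)
    have h2 : x ∉ tsupport (fun y : E3 => ρ t y * u t y i) := fun hmem => by
      have := htsupp hmem
      rw [Metric.mem_closedBall, dist_zero_right] at this
      linarith
    have h3 : fderiv ℝ (fun y : E3 => ρ t y * u t y i) x = 0 := by
      by_contra hne
      exact h2 (support_fderiv_subset ℝ (Function.mem_support.mpr hne))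
    rw [h3]; rfl
  have int1 : ∀ i : Fin 3, Integrable (fun x : E3 =>
      -(Kf x * fderiv ℝ (fun y => ρ t y * u t y i) x (EuclideanSpace.single i 1)))
      (volume : Measure E3) := fun i =>
    (cpt_integrable (Kf_cont.mul (hdfc i)) (fun x hx => by rw [Pi.mul_apply, hdf0 i x hx, mul_zero])).neg
  have int2 : ∀ i : Fin 3, Integrable (fun x : E3 => (ρ t x * u t x i) * Lf i x)
      (volume : Measure E3) := fun i =>
    cpt_integrable (((hρt.continuous).mul (hut i).continuous).mul (Lf_cont i))
      (fun x hx => by rw [hfis i x hx, zero_mul])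
  calc (∫ x : E3, Kf x *
        (fderivWithin ℝ (fun p : ℝ × E3 => ρ p.1 p.2) (Ico 0 T ×ˢ univ) (t, x)) (1, 0))
      = ∫ x : E3, ∑ i : Fin 3,
          -(Kf x * fderiv ℝ (fun y => ρ t y * u t y i) x (EuclideanSpace.single i 1)) := by
        congr 1
        funext x
        rw [hgd x, eq_neg_of_add_eq_zero_left (hcont t htS x), mul_neg, Finset.mul_sum,
          ← Finset.sum_neg_distrib]
    _ = ∑ i : Fin 3, ∫ x : E3,
          -(Kf x * fderiv ℝ (fun y => ρ t y * u t y i) x (EuclideanSpace.single i 1)) :=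
        integral_finset_sum _ fun i _ => int1 i
    _ = ∑ i : Fin 3, ∫ x : E3, (ρ t x * u t x i) * Lf i x := by
        refine Finset.sum_congr rfl fun i _ => ?_
        rw [integral_neg, hparts i, neg_neg]
    _ = ∫ x : E3, ∑ i : Fin 3, (ρ t x * u t x i) * Lf i x :=
        (integral_finset_sum _ fun i _ => int2 i).symm


end Stmt15Aux

open Stmt15Aux

/-- Reduction step `X' = Y`: if `ρ, u` are `C¹` on `[0,T) × ℝ³`, `ρ - 1` and `u` are
supported in `{|x| ≤ t+1}`, and the continuity equation `∂ₜρ + ∇·(ρu) = 0` holds, then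
`X(t) = ∫∫ e^{ω·x}(ρ-1)` is differentiable with `X' = Y = ∫∫ e^{ω·x} ρ (u·ω)`. -/
theorem stmt_15 (T : ℝ)
    (ρ : ℝ → EuclideanSpace ℝ (Fin 3) → ℝ)
    (u : ℝ → EuclideanSpace ℝ (Fin 3) → EuclideanSpace ℝ (Fin 3))
    (hρ : ContDiffOn ℝ 1 (fun p : ℝ × EuclideanSpace ℝ (Fin 3) => ρ p.1 p.2)
      (Ico 0 T ×ˢ univ))
    (hu : ContDiffOn ℝ 1 (fun p : ℝ × EuclideanSpace ℝ (Fin 3) => u p.1 p.2)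
      (Ico 0 T ×ˢ univ))
    (hsupp : ∀ t ∈ Ico (0 : ℝ) T, ∀ x : EuclideanSpace ℝ (Fin 3),
      t + 1 < ‖x‖ → ρ t x = 1 ∧ u t x = 0)
    (hcont : ∀ t ∈ Ico (0 : ℝ) T, ∀ x : EuclideanSpace ℝ (Fin 3),
      deriv (fun s => ρ s x) t
        + ∑ i : Fin 3,
            fderiv ℝ (fun y => ρ t y * u t y i) x (EuclideanSpace.single i 1) = 0)
    (X Y : ℝ → ℝ)
    (hX : ∀ t, X t = ∫ x : EuclideanSpace ℝ (Fin 3),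
        ∫ ω : Metric.sphere (0 : EuclideanSpace ℝ (Fin 3)) 1,
          exp (inner ℝ (ω : EuclideanSpace ℝ (Fin 3)) x) * (ρ t x - 1)
        ∂((volume : Measure (EuclideanSpace ℝ (Fin 3))).toSphere))
    (hY : ∀ t, Y t = ∫ x : EuclideanSpace ℝ (Fin 3),
        ∫ ω : Metric.sphere (0 : EuclideanSpace ℝ (Fin 3)) 1,
          exp (inner ℝ (ω : EuclideanSpace ℝ (Fin 3)) x)
            * (ρ t x * inner ℝ (u t x) (ω : EuclideanSpace ℝ (Fin 3)))
        ∂((volume : Measure (EuclideanSpace ℝ (Fin 3))).toSphere)) :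
    ∀ t ∈ Ico (0 : ℝ) T, HasDerivWithinAt X (Y t) (Ico 0 T) t := by
  intro t₀ ht₀
  have hsuppρ : ∀ t ∈ Ico (0:ℝ) T, ∀ x : E3, t + 1 < ‖x‖ → ρ t x = 1 :=
    fun t ht x hx => (hsupp t ht x hx).1
  have hXfun : X = fun t => ∫ x : E3, Kf x * (ρ t x - 1) :=
    funext fun t => by rw [hX t]; exact X_eq _
  have hYval : ∀ t, Y t = ∫ x : E3, ∑ i : Fin 3, (ρ t x * u t x i) * Lf i x := by
    intro t
    rw [hY t]
    have h1 : (fun x : E3 => ∫ ω : Ω3,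
        Real.exp (inner ℝ (ω : E3) x) * (ρ t x * (inner ℝ (u t x) (ω : E3) : ℝ)) ∂μS)
        = fun x : E3 => ∑ i : Fin 3, (ρ t x * u t x i) * Lf i x :=
      funext fun x => Y_inner x (ρ t x) (u t x)
    rw [h1]
  have hD := deriv_under_integral hρ hsuppρ Kf_cont ht₀
  have hAY : (∫ x : E3, Kf x *
      (fderivWithin ℝ (fun p : ℝ × E3 => ρ p.1 p.2) (Ico 0 T ×ˢ univ) (t₀, x)) (1, 0))
      = ∫ x : E3, ∑ i : Fin 3, (ρ t₀ x * u t₀ x i) * Lf i x := by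
    rcases eq_or_lt_of_le ht₀.1 with hzero | hpos
    · -- endpoint case t₀ = 0
      have hT : (0:ℝ) < T := by rw [← hzero] at ht₀; exact ht₀.2
      subst hzero
      have hUD : UniqueDiffOn ℝ ((Ico (0:ℝ) T) ×ˢ (univ : Set E3)) :=
        (uniqueDiffOn_Ico 0 T).prod uniqueDiffOn_univ
      have hg0 : ∀ t ∈ Ico (0:ℝ) T, ∀ x : E3, t + 1 < ‖x‖ →
          (fderivWithin ℝ (fun q : ℝ × E3 => ρ q.1 q.2) (Ico 0 T ×ˢ univ) (t, x)) (1, 0)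
            = 0 := by
        intro t htm x hx
        have hopen : IsOpen {p : ℝ × E3 | p.1 + 1 < ‖p.2‖} :=
          isOpen_lt (continuous_fst.add continuous_const) (continuous_norm.comp continuous_snd)
        have hev : (fun q : ℝ × E3 => ρ q.1 q.2)
            =ᶠ[𝓝[Ico (0:ℝ) T ×ˢ (univ : Set E3)] (t, x)] fun _ => (1:ℝ) := by
          filter_upwards [mem_nhdsWithin_of_mem_nhds (hopen.mem_nhds hx),
            self_mem_nhdsWithin] with p hp1 hp2
          exact (hsupp p.1 hp2.1 p.2 hp1).1
        rw [hev.fderivWithin_eq ((hsupp t htm x hx).1),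
          fderivWithin_const_apply _]
        rfl
      have hAc : ContinuousWithinAt (fun t => ∫ x : E3, Kf x *
          (fderivWithin ℝ (fun p : ℝ × E3 => ρ p.1 p.2) (Ico 0 T ×ˢ univ) (t, x)) (1, 0))
          (Ico 0 T) 0 := by
        refine cont_int ?_ ?_ ht₀
        · refine ContinuousOn.mul (Kf_cont.comp continuous_snd).continuousOn ?_
          exact (hρ.continuousOn_fderivWithin hUD le_rfl).clm_apply continuousOn_const
        · intro t htm x hx
          rw [hg0 t htm x hx, mul_zero]
      have hYc : ContinuousWithinAt
          (fun t => ∫ x : E3, ∑ i : Fin 3, (ρ t x * u t x i) * Lf i x) (Ico 0 T) 0 := by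
        refine cont_int ?_ ?_ ht₀
        · refine continuousOn_finset_sum _ fun i _ => ?_
          refine ContinuousOn.mul (hρ.continuousOn.mul ?_) ?_
          · exact (cont_coordE i).comp_continuousOn hu.continuousOn
          · exact ((Lf_cont i).comp continuous_snd).continuousOn
        · intro t htm x hx
          have := (hsupp t htm x hx).2
          refine Finset.sum_eq_zero fun i _ => ?_
          rw [this]
          simp
      haveI hne : (𝓝[Ioo (0:ℝ) T] (0:ℝ)).NeBot := by
        refine mem_closure_iff_nhdsWithin_neBot.mp ?_
        rw [closure_Ioo (ne_of_lt hT)]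
        exact ⟨le_refl 0, le_of_lt hT⟩
      have hmono : 𝓝[Ioo (0:ℝ) T] (0:ℝ) ≤ 𝓝[Ico (0:ℝ) T] (0:ℝ) :=
        nhdsWithin_mono _ Ioo_subset_Ico_self
      have heq : (fun t => ∫ x : E3, Kf x *
          (fderivWithin ℝ (fun p : ℝ × E3 => ρ p.1 p.2) (Ico 0 T ×ˢ univ) (t, x)) (1, 0))
          =ᶠ[𝓝[Ioo (0:ℝ) T] (0:ℝ)]
          fun t => ∫ x : E3, ∑ i : Fin 3, (ρ t x * u t x i) * Lf i x :=
        eventually_of_mem self_mem_nhdsWithin fun s hs =>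
          interior_eq hρ hu hsupp hcont hs
      exact tendsto_nhds_unique ((hAc.mono_left hmono).congr' heq) (hYc.mono_left hmono)
    · exact interior_eq hρ hu hsupp hcont ⟨hpos, ht₀.2⟩
  rw [hXfun, hYval t₀, ← hAY]
  exact hD
end
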